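/- For every r ∈ 𝒫 = {r ∈ 𝒢 : P(r) = 0}, the gradients of the Cayley–Menger determinant and of the Ptolemy function are parallel: ∇H(r) = 2 Q(r) ∇P(r), where the gradient is taken with respect to the six variables (r₁₂, r₁₃, r₁₄, r₂₃, r₂₄, r₃₄). -/

import Mathlib

/-- The Cayley–Menger determinant as a function of
`r = (r₁₂, r₁₃, r₁₄, r₂₃, r₂₄, r₃₄) ∈ ℝ⁶`. -/
noncomputable def Hvec (r : Fin 6 → ℝ) : ℝ :=
  Matrix.det !![(0:ℝ), 1, 1, 1, 1;
                1, 0, (r 0)^2, (r 1)^2, (r 2)^2;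
                1, (r 0)^2, 0, (r 3)^2, (r 4)^2;
                1, (r 1)^2, (r 3)^2, 0, (r 5)^2;
                1, (r 2)^2, (r 4)^2, (r 5)^2, 0]

/-- The Ptolemy function `P` as a function of `r ∈ ℝ⁶`. -/
def Pvec (r : Fin 6 → ℝ) : ℝ :=
  r 0 * r 5 + r 2 * r 3 - r 1 * r 4

/-- The function `Q` as a function of `r ∈ ℝ⁶`. -/
def Qvec (r : Fin 6 → ℝ) : ℝ :=
  r 0 * r 5 * (-(r 0)^2 - (r 5)^2 + (r 3)^2 + (r 2)^2 + (r 1)^2 + (r 4)^2)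
  + r 2 * r 3 * ((r 0)^2 + (r 5)^2 - (r 3)^2 - (r 2)^2 + (r 1)^2 + (r 4)^2)
  - r 1 * r 4 * ((r 0)^2 + (r 5)^2 + (r 3)^2 + (r 2)^2 - (r 1)^2 - (r 4)^2)

/-- Membership in `𝒢` for `r = (r₁₂, r₁₃, r₁₄, r₂₃, r₂₄, r₃₄) ∈ ℝ⁶`. -/
noncomputable def memG (r : Fin 6 → ℝ) : Prop :=
  (∀ i, 0 < r i) ∧ 0 ≤ Hvec r ∧
  r 0 + r 3 > r 1 ∧ r 0 + r 1 > r 3 ∧ r 1 + r 3 > r 0 ∧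
  r 0 + r 4 > r 2 ∧ r 0 + r 2 > r 4 ∧ r 2 + r 4 > r 0 ∧
  r 1 + r 5 > r 2 ∧ r 1 + r 2 > r 5 ∧ r 2 + r 5 > r 1 ∧
  r 3 + r 5 > r 4 ∧ r 3 + r 4 > r 5 ∧ r 4 + r 5 > r 3



noncomputable def gradAuxProj (i : Fin 6) : (Fin 6 → ℝ) →L[ℝ] ℝ := ContinuousLinearMap.proj i

private lemma det4_aux (A : Matrix (Fin 4) (Fin 4) ℝ) :
    A.det =
      A 0 0 * (A 1 1 * A 2 2 * A 3 3 - A 1 1 * A 2 3 * A 3 2 - A 1 2 * A 2 1 * A 3 3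
        + A 1 2 * A 2 3 * A 3 1 + A 1 3 * A 2 1 * A 3 2 - A 1 3 * A 2 2 * A 3 1)
      - A 0 1 * (A 1 0 * A 2 2 * A 3 3 - A 1 0 * A 2 3 * A 3 2 - A 1 2 * A 2 0 * A 3 3
        + A 1 2 * A 2 3 * A 3 0 + A 1 3 * A 2 0 * A 3 2 - A 1 3 * A 2 2 * A 3 0)
      + A 0 2 * (A 1 0 * A 2 1 * A 3 3 - A 1 0 * A 2 3 * A 3 1 - A 1 1 * A 2 0 * A 3 3
        + A 1 1 * A 2 3 * A 3 0 + A 1 3 * A 2 0 * A 3 1 - A 1 3 * A 2 1 * A 3 0)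
      - A 0 3 * (A 1 0 * A 2 1 * A 3 2 - A 1 0 * A 2 2 * A 3 1 - A 1 1 * A 2 0 * A 3 2
        + A 1 1 * A 2 2 * A 3 0 + A 1 2 * A 2 0 * A 3 1 - A 1 2 * A 2 1 * A 3 0) := by
  rw [Matrix.det_succ_row_zero]
  simp [Fin.sum_univ_succ, Matrix.det_fin_three, Fin.succAbove, Matrix.submatrix_apply]
  ring

set_option maxRecDepth 4000 in
set_option maxHeartbeats 2000000 in
private lemma hvec_expand (y : Fin 6 → ℝ) :
    Hvec y = (-2 : ℝ) * (((((y 3 * y 3) * y 4) * y 4) * y 5) * y 5) + (2 : ℝ) * (((((y 2 * y 2) * y 3) * y 3) * y 5) * y 5) + (2 : ℝ) * (((((y 2 * y 2) * y 3) * y 3) * y 4) * y 4) + (-2 : ℝ) * (((((y 2 * y 2) * y 3) * y 3) * y 3) * y 3) + (-2 : ℝ) * (((((y 2 * y 2) * y 2) * y 2) * y 3) * y 3) + (2 : ℝ) * (((((y 1 * y 1) * y 4) * y 4) * y 5) * y 5) + (-2 : ℝ) * (((((y 1 * y 1) * y 4) * y 4) * y 4) * y 4) + (2 : ℝ) * (((((y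 1 * y 1) * y 3) * y 3) * y 4) * y 4) + (-2 : ℝ) * (((((y 1 * y 1) * y 2) * y 2) * y 5) * y 5) + (2 : ℝ) * (((((y 1 * y 1) * y 2) * y 2) * y 4) * y 4) + (2 : ℝ) * (((((y 1 * y 1) * y 2) * y 2) * y 3) * y 3) + (-2 : ℝ) * (((((y 1 * y 1) * y 1) * y 1) * y 4) * y 4) + (-2 : ℝ) * (((((y 0 * y 0) * y 5) * y 5) * y 5) * y 5) + (2 : ℝ) * (((((y 0 * y 0) * y 4) * y 4) * y 5) * y 5) + (2 : ℝ) * (((((y 0 * y 0) * y 3) * y 3) * y 5) * y 5) + (2 : ℝ) * (((((y 0 * y 0) * y 2) * y 2) * y 5) * y 5) + (-2 : ℝ) * (((((y 0 * y 0) * y 2) * y 2) * y 4) * y 4) + (2 : ℝ) * (((((y 0 * y 0) * y 2) * y 2) * y 3) * y 3) + (2 : ℝ) * (((((y 0 * y 0) * y 1) * y 1) * y 5) * y 5) + (2 : ℝ) * (((((y 0 * y 0) * y 1) * y 1) * y 4) * y 4) + (-2 : ℝ) * (((((y 0 * y 0) * y 1) * y 1) * y 3) * y 3) + (-2 : ℝ)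 * (((((y 0 * y 0) * y 0) * y 0) * y 5) * y 5) := by
  show Matrix.det _ = _
  rw [Matrix.det_succ_row_zero]
  simp (config := { decide := true }) [Fin.sum_univ_succ, det4_aux, Fin.succAbove,
    Matrix.submatrix_apply]
  ring

set_option maxRecDepth 8000 in
set_option maxHeartbeats 4000000 in
/-- On `𝒫 = {r ∈ 𝒢 : P(r) = 0}` the gradients of the Cayley–Menger
determinant `H` and of the Ptolemy function `P` are parallel:
`∇H(r) = 2 Q(r) ∇P(r)`. -/
theorem grad_H_parallel_grad_P (r : Fin 6 → ℝ)
    (hG : memG r) (hP : Pvec r = 0) :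
    fderiv ℝ Hvec r = (2 * Qvec r) • fderiv ℝ Pvec r := by
  have hp : ∀ i : Fin 6, HasFDerivAt (fun y : Fin 6 → ℝ => y i)
      (gradAuxProj i) r :=
    fun i => hasFDerivAt_apply i r
  have hHc : HasFDerivAt (fun y : Fin 6 → ℝ => (-2 : ℝ) * (((((y 3 * y 3) * y 4) * y 4) * y 5) * y 5) + (2 : ℝ) * (((((y 2 * y 2) * y 3) * y 3) * y 5) * y 5) + (2 : ℝ) * (((((y 2 * y 2) * y 3) * y 3) * y 4) * y 4) + (-2 : ℝ) * (((((y 2 * y 2) * y 3) * y 3) * y 3) * y 3) + (-2 : ℝ) * (((((y 2 * y 2) * y 2) * y 2) * y 3) * y 3) + (2 : ℝ) * (((((y 1 * y 1) * y 4) * y 4) * y 5) * y 5) + (-2 : ℝ) * (((((y 1 * y 1) * y 4) * y 4) * y 4) * y 4) + (2 : ℝ) * (((((y 1 * y 1) * y 3) * y 3) * y 4) * y 4) + (-2 : ℝ) * (((((y 1 * y 1) * y 2) * y 2) * y 5) * y 5) + (2 : ℝ) * (((((y 1 * y 1) * y 2) * y 2) * y 4) * y 4) + (2 : ℝ) * (((((y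 1 * y 1) * y 2) * y 2) * y 3) * y 3) + (-2 : ℝ) * (((((y 1 * y 1) * y 1) * y 1) * y 4) * y 4) + (-2 : ℝ) * (((((y 0 * y 0) * y 5) * y 5) * y 5) * y 5) + (2 : ℝ) * (((((y 0 * y 0) * y 4) * y 4) * y 5) * y 5) + (2 : ℝ) * (((((y 0 * y 0) * y 3) * y 3) * y 5) * y 5) + (2 : ℝ) * (((((y 0 * y 0) * y 2) * y 2) * y 5) * y 5) + (-2 : ℝ) * (((((y 0 * y 0) * y 2) * y 2) * y 4) * y 4) + (2 : ℝ) * (((((y 0 * y 0) * y 2) * y 2) * y 3) * y 3) + (2 : ℝ) * (((((y 0 * y 0) * y 1) * y 1) * y 5) * y 5) + (2 : ℝ) * (((((y 0 * y 0) * y 1) * y 1) * y 4) * y 4) + (-2 : ℝ) * (((((y 0 * y 0) * y 1) * y 1) * y 3) * y 3) + (-2 : ℝ) * (((((y 0 * y 0) * y 0) * y 0) * y 5) * y 5))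
      (((-2 : ℝ) • ((((((r 3 * r 3) * r 4) * r 4) * r 5)) • (gradAuxProj 5) + (r 5) • ((((((r 3 * r 3) * r 4) * r 4)) • (gradAuxProj 5) + (r 5) • (((((r 3 * r 3) * r 4)) • (gradAuxProj 4) + (r 4) • ((((r 3 * r 3)) • (gradAuxProj 4) + (r 4) • (((r 3) • (gradAuxProj 3) + (r 3) • (gradAuxProj 3))))))))))) + ((2 : ℝ) • ((((((r 2 * r 2) * r 3) * r 3) * r 5)) • (gradAuxProj 5) + (r 5) • ((((((r 2 * r 2) * r 3) * r 3)) • (gradAuxProj 5) + (r 5) • (((((r 2 * r 2) * r 3)) • (gradAuxProj 3) + (r 3) • ((((r 2 * r 2)) • (gradAuxProj 3) + (r 3) • (((r 2) • (gradAuxProj 2) + (r 2) • (gradAuxProj 2))))))))))) + ((2 : ℝ) • ((((((r 2 * r 2) * r 3) * r 3) * r 4)) • (gradAuxProj 4) + (r 4) • ((((((r 2 * r 2) * r 3) * r 3)) • (gradAuxProj 4) + (r 4) • (((((r 2 * r 2) * r 3)) • (gradAuxProj 3) + (r 3) • ((((r 2 * r 2)) • (gradAuxProj 3) + (r 3) •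 (((r 2) • (gradAuxProj 2) + (r 2) • (gradAuxProj 2))))))))))) + ((-2 : ℝ) • ((((((r 2 * r 2) * r 3) * r 3) * r 3)) • (gradAuxProj 3) + (r 3) • ((((((r 2 * r 2) * r 3) * r 3)) • (gradAuxProj 3) + (r 3) • (((((r 2 * r 2) * r 3)) • (gradAuxProj 3) + (r 3) • ((((r 2 * r 2)) • (gradAuxProj 3) + (r 3) • (((r 2) • (gradAuxProj 2) + (r 2) • (gradAuxProj 2))))))))))) + ((-2 : ℝ) • ((((((r 2 * r 2) * r 2) * r 2) * r 3)) • (gradAuxProj 3) + (r 3) • ((((((r 2 * r 2) * r 2) * r 2)) • (gradAuxProj 3) + (r 3) • (((((r 2 * r 2) * r 2)) • (gradAuxProj 2) + (r 2) • ((((r 2 * r 2)) • (gradAuxProj 2) + (r 2) • (((r 2) • (gradAuxProj 2) + (r 2) • (gradAuxProj 2))))))))))) + ((2 : ℝ) • ((((((r 1 * r 1) * r 4) * r 4) * r 5)) • (gradAuxProj 5) + (r 5) • ((((((r 1 * r 1) * r 4) * r 4)) • (gradAuxProj 5) + (r 5) • (((((r 1 * r 1) * r 4)) • (gradAuxProj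 4) + (r 4) • ((((r 1 * r 1)) • (gradAuxProj 4) + (r 4) • (((r 1) • (gradAuxProj 1) + (r 1) • (gradAuxProj 1))))))))))) + ((-2 : ℝ) • ((((((r 1 * r 1) * r 4) * r 4) * r 4)) • (gradAuxProj 4) + (r 4) • ((((((r 1 * r 1) * r 4) * r 4)) • (gradAuxProj 4) + (r 4) • (((((r 1 * r 1) * r 4)) • (gradAuxProj 4) + (r 4) • ((((r 1 * r 1)) • (gradAuxProj 4) + (r 4) • (((r 1) • (gradAuxProj 1) + (r 1) • (gradAuxProj 1))))))))))) + ((2 : ℝ) • ((((((r 1 * r 1) * r 3) * r 3) * r 4)) • (gradAuxProj 4) + (r 4) • ((((((r 1 * r 1) * r 3) * r 3)) • (gradAuxProj 4) + (r 4) • (((((r 1 * r 1) * r 3)) • (gradAuxProj 3) + (r 3) • ((((r 1 * r 1)) • (gradAuxProj 3) + (r 3) • (((r 1) • (gradAuxProj 1) + (r 1) • (gradAuxProj 1))))))))))) + ((-2 : ℝ) • ((((((r 1 * r 1) * r 2) * r 2) * r 5)) • (gradAuxProj 5) + (r 5) • ((((((r 1 * r 1) * r 2) * r 2)) • (gradAuxProj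 5) + (r 5) • (((((r 1 * r 1) * r 2)) • (gradAuxProj 2) + (r 2) • ((((r 1 * r 1)) • (gradAuxProj 2) + (r 2) • (((r 1) • (gradAuxProj 1) + (r 1) • (gradAuxProj 1))))))))))) + ((2 : ℝ) • ((((((r 1 * r 1) * r 2) * r 2) * r 4)) • (gradAuxProj 4) + (r 4) • ((((((r 1 * r 1) * r 2) * r 2)) • (gradAuxProj 4) + (r 4) • (((((r 1 * r 1) * r 2)) • (gradAuxProj 2) + (r 2) • ((((r 1 * r 1)) • (gradAuxProj 2) + (r 2) • (((r 1) • (gradAuxProj 1) + (r 1) • (gradAuxProj 1))))))))))) + ((2 : ℝ) • ((((((r 1 * r 1) * r 2) * r 2) * r 3)) • (gradAuxProj 3) + (r 3) • ((((((r 1 * r 1) * r 2) * r 2)) • (gradAuxProj 3) + (r 3) • (((((r 1 * r 1) * r 2)) • (gradAuxProj 2) + (r 2) • ((((r 1 * r 1)) • (gradAuxProj 2) + (r 2) • (((r 1) • (gradAuxProj 1) + (r 1) • (gradAuxProj 1))))))))))) + ((-2 : ℝ) • ((((((r 1 * r 1) * r 1) * r 1) * r 4)) • (gradAuxProj 4)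 + (r 4) • ((((((r 1 * r 1) * r 1) * r 1)) • (gradAuxProj 4) + (r 4) • (((((r 1 * r 1) * r 1)) • (gradAuxProj 1) + (r 1) • ((((r 1 * r 1)) • (gradAuxProj 1) + (r 1) • (((r 1) • (gradAuxProj 1) + (r 1) • (gradAuxProj 1))))))))))) + ((-2 : ℝ) • ((((((r 0 * r 0) * r 5) * r 5) * r 5)) • (gradAuxProj 5) + (r 5) • ((((((r 0 * r 0) * r 5) * r 5)) • (gradAuxProj 5) + (r 5) • (((((r 0 * r 0) * r 5)) • (gradAuxProj 5) + (r 5) • ((((r 0 * r 0)) • (gradAuxProj 5) + (r 5) • (((r 0) • (gradAuxProj 0) + (r 0) • (gradAuxProj 0))))))))))) + ((2 : ℝ) • ((((((r 0 * r 0) * r 4) * r 4) * r 5)) • (gradAuxProj 5) + (r 5) • ((((((r 0 * r 0) * r 4) * r 4)) • (gradAuxProj 5) + (r 5) • (((((r 0 * r 0) * r 4)) • (gradAuxProj 4) + (r 4) • ((((r 0 * r 0)) • (gradAuxProj 4) + (r 4) • (((r 0) • (gradAuxProj 0) + (r 0) • (gradAuxProj 0))))))))))) + ((2 : ℝ) •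 ((((((r 0 * r 0) * r 3) * r 3) * r 5)) • (gradAuxProj 5) + (r 5) • ((((((r 0 * r 0) * r 3) * r 3)) • (gradAuxProj 5) + (r 5) • (((((r 0 * r 0) * r 3)) • (gradAuxProj 3) + (r 3) • ((((r 0 * r 0)) • (gradAuxProj 3) + (r 3) • (((r 0) • (gradAuxProj 0) + (r 0) • (gradAuxProj 0))))))))))) + ((2 : ℝ) • ((((((r 0 * r 0) * r 2) * r 2) * r 5)) • (gradAuxProj 5) + (r 5) • ((((((r 0 * r 0) * r 2) * r 2)) • (gradAuxProj 5) + (r 5) • (((((r 0 * r 0) * r 2)) • (gradAuxProj 2) + (r 2) • ((((r 0 * r 0)) • (gradAuxProj 2) + (r 2) • (((r 0) • (gradAuxProj 0) + (r 0) • (gradAuxProj 0))))))))))) + ((-2 : ℝ) • ((((((r 0 * r 0) * r 2) * r 2) * r 4)) • (gradAuxProj 4) + (r 4) • ((((((r 0 * r 0) * r 2) * r 2)) • (gradAuxProj 4) + (r 4) • (((((r 0 * r 0) * r 2)) • (gradAuxProj 2) + (r 2) • ((((r 0 * r 0)) • (gradAuxProj 2) + (r 2) • (((r 0) • (gradAuxProj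 0) + (r 0) • (gradAuxProj 0))))))))))) + ((2 : ℝ) • ((((((r 0 * r 0) * r 2) * r 2) * r 3)) • (gradAuxProj 3) + (r 3) • ((((((r 0 * r 0) * r 2) * r 2)) • (gradAuxProj 3) + (r 3) • (((((r 0 * r 0) * r 2)) • (gradAuxProj 2) + (r 2) • ((((r 0 * r 0)) • (gradAuxProj 2) + (r 2) • (((r 0) • (gradAuxProj 0) + (r 0) • (gradAuxProj 0))))))))))) + ((2 : ℝ) • ((((((r 0 * r 0) * r 1) * r 1) * r 5)) • (gradAuxProj 5) + (r 5) • ((((((r 0 * r 0) * r 1) * r 1)) • (gradAuxProj 5) + (r 5) • (((((r 0 * r 0) * r 1)) • (gradAuxProj 1) + (r 1) • ((((r 0 * r 0)) • (gradAuxProj 1) + (r 1) • (((r 0) • (gradAuxProj 0) + (r 0) • (gradAuxProj 0))))))))))) + ((2 : ℝ) • ((((((r 0 * r 0) * r 1) * r 1) * r 4)) • (gradAuxProj 4) + (r 4) • ((((((r 0 * r 0) * r 1) * r 1)) • (gradAuxProj 4) + (r 4) • (((((r 0 * r 0) * r 1)) • (gradAuxProj 1) + (r 1) • ((((r 0 *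 r 0)) • (gradAuxProj 1) + (r 1) • (((r 0) • (gradAuxProj 0) + (r 0) • (gradAuxProj 0))))))))))) + ((-2 : ℝ) • ((((((r 0 * r 0) * r 1) * r 1) * r 3)) • (gradAuxProj 3) + (r 3) • ((((((r 0 * r 0) * r 1) * r 1)) • (gradAuxProj 3) + (r 3) • (((((r 0 * r 0) * r 1)) • (gradAuxProj 1) + (r 1) • ((((r 0 * r 0)) • (gradAuxProj 1) + (r 1) • (((r 0) • (gradAuxProj 0) + (r 0) • (gradAuxProj 0))))))))))) + ((-2 : ℝ) • ((((((r 0 * r 0) * r 0) * r 0) * r 5)) • (gradAuxProj 5) + (r 5) • ((((((r 0 * r 0) * r 0) * r 0)) • (gradAuxProj 5) + (r 5) • (((((r 0 * r 0) * r 0)) • (gradAuxProj 0) + (r 0) • ((((r 0 * r 0)) • (gradAuxProj 0) + (r 0) • (((r 0) • (gradAuxProj 0) + (r 0) • (gradAuxProj 0)))))))))))) r := ((((((((((((((((((((((((((((hp 3).mul (hp 3)).mul (hp 4)).mul (hp 4)).mul (hp 5)).mul (hp 5)).const_mul (-2 : ℝ)).add (((((((hp 2).mul (hp 2)).mul (hp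 3)).mul (hp 3)).mul (hp 5)).mul (hp 5)).const_mul (2 : ℝ))).add (((((((hp 2).mul (hp 2)).mul (hp 3)).mul (hp 3)).mul (hp 4)).mul (hp 4)).const_mul (2 : ℝ))).add (((((((hp 2).mul (hp 2)).mul (hp 3)).mul (hp 3)).mul (hp 3)).mul (hp 3)).const_mul (-2 : ℝ))).add (((((((hp 2).mul (hp 2)).mul (hp 2)).mul (hp 2)).mul (hp 3)).mul (hp 3)).const_mul (-2 : ℝ))).add (((((((hp 1).mul (hp 1)).mul (hp 4)).mul (hp 4)).mul (hp 5)).mul (hp 5)).const_mul (2 : ℝ))).add (((((((hp 1).mul (hp 1)).mul (hp 4)).mul (hp 4)).mul (hp 4)).mul (hp 4)).const_mul (-2 : ℝ))).add (((((((hp 1).mul (hp 1)).mul (hp 3)).mul (hp 3)).mul (hp 4)).mul (hp 4)).const_mul (2 : ℝ))).add (((((((hp 1).mul (hp 1)).mul (hp 2)).mul (hp 2)).mul (hp 5)).mul (hp 5)).const_mul (-2 : ℝ))).add (((((((hp 1).mul (hp 1)).mul (hp 2)).mul (hp 2)).mul (hp 4)).mul (hp 4)).const_mul (2 : ℝ))).add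 (((((((hp 1).mul (hp 1)).mul (hp 2)).mul (hp 2)).mul (hp 3)).mul (hp 3)).const_mul (2 : ℝ))).add (((((((hp 1).mul (hp 1)).mul (hp 1)).mul (hp 1)).mul (hp 4)).mul (hp 4)).const_mul (-2 : ℝ))).add (((((((hp 0).mul (hp 0)).mul (hp 5)).mul (hp 5)).mul (hp 5)).mul (hp 5)).const_mul (-2 : ℝ))).add (((((((hp 0).mul (hp 0)).mul (hp 4)).mul (hp 4)).mul (hp 5)).mul (hp 5)).const_mul (2 : ℝ))).add (((((((hp 0).mul (hp 0)).mul (hp 3)).mul (hp 3)).mul (hp 5)).mul (hp 5)).const_mul (2 : ℝ))).add (((((((hp 0).mul (hp 0)).mul (hp 2)).mul (hp 2)).mul (hp 5)).mul (hp 5)).const_mul (2 : ℝ))).add (((((((hp 0).mul (hp 0)).mul (hp 2)).mul (hp 2)).mul (hp 4)).mul (hp 4)).const_mul (-2 : ℝ))).add (((((((hp 0).mul (hp 0)).mul (hp 2)).mul (hp 2)).mul (hp 3)).mul (hp 3)).const_mul (2 : ℝ))).add (((((((hp 0).mul (hp 0)).mul (hp 1)).mul (hp 1)).mul (hp 5)).mul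 (hp 5)).const_mul (2 : ℝ))).add (((((((hp 0).mul (hp 0)).mul (hp 1)).mul (hp 1)).mul (hp 4)).mul (hp 4)).const_mul (2 : ℝ))).add (((((((hp 0).mul (hp 0)).mul (hp 1)).mul (hp 1)).mul (hp 3)).mul (hp 3)).const_mul (-2 : ℝ))).add (((((((hp 0).mul (hp 0)).mul (hp 0)).mul (hp 0)).mul (hp 5)).mul (hp 5)).const_mul (-2 : ℝ)))
  have hHv := hHc.congr_of_eventuallyEq (Filter.Eventually.of_forall hvec_expand)
  have hPv : HasFDerivAt Pvec ((((r 0) • (gradAuxProj 5) + (r 5) • (gradAuxProj 0)) + ((r 2) • (gradAuxProj 3) + (r 3) • (gradAuxProj 2))) - ((r 1) • (gradAuxProj 4) + (r 4) • (gradAuxProj 1))) r := ((((hp 0).mul (hp 5)).add ((hp 2).mul (hp 3))).sub ((hp 1).mul (hp 4)))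
  have hP' : r 0 * r 5 + r 2 * r 3 - r 1 * r 4 = 0 := hP
  have h0 : (0:ℝ) < r 0 := hG.1 0
  have hHr : 0 ≤ Hvec r := hG.2.1
  have key : (r 0)^4 * Hvec r = -(2*(r 0)^2*((1 : ℝ)*r 2*r 3^2*r 4 + (-1 : ℝ)*r 1*r 3*r 4^2 + (-1 : ℝ)*r 1*r 2^2*r 3 + (1 : ℝ)*r 1^2*r 2*r 4 + (-1 : ℝ)*r 0^2*r 2*r 4 + (1 : ℝ)*r 0^2*r 1*r 3)^2) := by
    rw [hvec_expand]
    linear_combination ((2 : ℝ)*r 0^2*r 2*r 3^3*r 4^2 + (-2 : ℝ)*r 0^2*r 1*r 3^2*r 4^3 + (-4 : ℝ)*r 0^2*r 1*r 2^2*r 3^2*r 4 + (4 : ℝ)*r 0^2*r 1^2*r 2*r 3*r 4^2 + (2 : ℝ)*r 0^2*r 1^2*r 2^3*r 3 + (-2 : ℝ)*r 0^2*r 1^3*r 2^2*r 4 + (-2 : ℝ)*r 0^3*r 3^2*r 4^2*r 5 + (4 : ℝ)*r 0^3*r 1*r 2*r 3*r 4*r 5 + (-2 : ℝ)*r 0^3*r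 1^2*r 2^2*r 5 + (2 : ℝ)*r 0^4*r 2*r 3*r 5^2 + (-2 : ℝ)*r 0^4*r 2*r 3*r 4^2 + (-2 : ℝ)*r 0^4*r 2*r 3^3 + (-2 : ℝ)*r 0^4*r 2^3*r 3 + (-2 : ℝ)*r 0^4*r 1*r 4*r 5^2 + (2 : ℝ)*r 0^4*r 1*r 4^3 + (2 : ℝ)*r 0^4*r 1*r 3^2*r 4 + (2 : ℝ)*r 0^4*r 1*r 2^2*r 4 + (-2 : ℝ)*r 0^4*r 1^2*r 2*r 3 + (2 : ℝ)*r 0^4*r 1^3*r 4 + (-2 : ℝ)*r 0^5*r 5^3 + (2 : ℝ)*r 0^5*r 4^2*r 5 + (2 : ℝ)*r 0^5*r 3^2*r 5 + (2 : ℝ)*r 0^5*r 2^2*r 5 + (2 : ℝ)*r 0^5*r 1^2*r 5 + (2 : ℝ)*r 0^6*r 2*r 3 + (-2 : ℝ)*r 0^6*r 1*r 4 + (-2 : ℝ)*r 0^7*r 5) * hP'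
  have hfact : 0 ≤ (r 0)^4 * Hvec r := mul_nonneg (pow_nonneg h0.le 4) hHr
  have hsqle : ((1 : ℝ)*r 2*r 3^2*r 4 + (-1 : ℝ)*r 1*r 3*r 4^2 + (-1 : ℝ)*r 1*r 2^2*r 3 + (1 : ℝ)*r 1^2*r 2*r 4 + (-1 : ℝ)*r 0^2*r 2*r 4 + (1 : ℝ)*r 0^2*r 1*r 3)^2 ≤ 0 := by nlinarith [key, hfact, pow_pos h0 2, sq_nonneg ((1 : ℝ)*r 2*r 3^2*r 4 + (-1 : ℝ)*r 1*r 3*r 4^2 + (-1 : ℝ)*r 1*r 2^2*r 3 + (1 : ℝ)*r 1^2*r 2*r 4 + (-1 : ℝ)*r 0^2*r 2*r 4 + (1 : ℝ)*r 0^2*r 1*r 3)]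
  have hG1 : ((1 : ℝ)*r 2*r 3^2*r 4 + (-1 : ℝ)*r 1*r 3*r 4^2 + (-1 : ℝ)*r 1*r 2^2*r 3 + (1 : ℝ)*r 1^2*r 2*r 4 + (-1 : ℝ)*r 0^2*r 2*r 4 + (1 : ℝ)*r 0^2*r 1*r 3) = 0 := by
    have h2 := le_antisymm hsqle (sq_nonneg _)
    exact pow_eq_zero_iff two_ne_zero |>.mp h2
  rw [hHv.fderiv, hPv.fderiv]
  refine ContinuousLinearMap.ext fun v => ?_
  simp only [ContinuousLinearMap.add_apply, ContinuousLinearMap.sub_apply,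
    ContinuousLinearMap.smul_apply, gradAuxProj, ContinuousLinearMap.proj_apply, smul_eq_mul, Qvec]
  apply mul_left_cancel₀ (pow_ne_zero 4 (ne_of_gt h0))
  linear_combination (v 0 * ((-4 : ℝ)*r 0^3*r 2*r 3*r 4^2 + (4 : ℝ)*r 0^3*r 1*r 3^2*r 4 + (4 : ℝ)*r 0^3*r 1*r 2^2*r 4 + (-4 : ℝ)*r 0^3*r 1^2*r 2*r 3 + (-2 : ℝ)*r 0^4*r 5^3 + (2 : ℝ)*r 0^4*r 4^2*r 5 + (2 : ℝ)*r 0^4*r 3^2*r 5 + (2 : ℝ)*r 0^4*r 2^2*r 5 + (2 : ℝ)*r 0^4*r 1^2*r 5 + (4 : ℝ)*r 0^5*r 2*r 3 + (-4 : ℝ)*r 0^5*r 1*r 4 + (-6 : ℝ)*r 0^6*r 5) + v 1 * ((-4 : ℝ)*r 0*r 2^2*r 3^2*r 4 + (4 : ℝ)*r 0*r 1*r 2*r 3*r 4^2 + (4 : ℝ)*r 0*r 1*r 2^3*r 3 + (-4 : ℝ)*r 0*r 1^2*r 2^2*r 4 + (4 : ℝ)*r 0^2*r 2*r 3*r 4*r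 5 + (-4 : ℝ)*r 0^2*r 1*r 2^2*r 5 + (-2 : ℝ)*r 0^3*r 4*r 5^2 + (2 : ℝ)*r 0^3*r 4^3 + (2 : ℝ)*r 0^3*r 3^2*r 4 + (2 : ℝ)*r 0^3*r 2^2*r 4 + (-4 : ℝ)*r 0^3*r 1*r 2*r 3 + (6 : ℝ)*r 0^3*r 1^2*r 4 + (4 : ℝ)*r 0^4*r 1*r 5 + (-2 : ℝ)*r 0^5*r 4) * r 0 + v 2 * ((-4 : ℝ)*r 0*r 1*r 2*r 3^2*r 4 + (4 : ℝ)*r 0*r 1^2*r 3*r 4^2 + (4 : ℝ)*r 0*r 1^2*r 2^2*r 3 + (-4 : ℝ)*r 0*r 1^3*r 2*r 4 + (4 : ℝ)*r 0^2*r 1*r 3*r 4*r 5 + (-4 : ℝ)*r 0^2*r 1^2*r 2*r 5 + (2 : ℝ)*r 0^3*r 3*r 5^2 + (-2 : ℝ)*r 0^3*r 3*r 4^2 + (-2 : ℝ)*r 0^3*r 3^3 + (-6 : ℝ)*r 0^3*r 2^2*r 3 + (4 : ℝ)*r 0^3*r 1*r 2*r 4 + (-2 : ℝ)*r 0^3*r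 1^2*r 3 + (4 : ℝ)*r 0^4*r 2*r 5 + (2 : ℝ)*r 0^5*r 3) * r 0 + v 3 * ((4 : ℝ)*r 0*r 2*r 3^2*r 4^2 + (-4 : ℝ)*r 0*r 1*r 3*r 4^3 + (-4 : ℝ)*r 0*r 1*r 2^2*r 3*r 4 + (4 : ℝ)*r 0*r 1^2*r 2*r 4^2 + (-4 : ℝ)*r 0^2*r 3*r 4^2*r 5 + (4 : ℝ)*r 0^2*r 1*r 2*r 4*r 5 + (2 : ℝ)*r 0^3*r 2*r 5^2 + (-2 : ℝ)*r 0^3*r 2*r 4^2 + (-6 : ℝ)*r 0^3*r 2*r 3^2 + (-2 : ℝ)*r 0^3*r 2^3 + (4 : ℝ)*r 0^3*r 1*r 3*r 4 + (-2 : ℝ)*r 0^3*r 1^2*r 2 + (4 : ℝ)*r 0^4*r 3*r 5 + (2 : ℝ)*r 0^5*r 2) * r 0 + v 4 * ((4 : ℝ)*r 0*r 2*r 3^3*r 4 + (-4 : ℝ)*r 0*r 1*r 3^2*r 4^2 + (-4 : ℝ)*r 0*r 1*r 2^2*r 3^2 + (4 : ℝ)*r 0*r 1^2*r 2*r 3*r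 4 + (-4 : ℝ)*r 0^2*r 3^2*r 4*r 5 + (4 : ℝ)*r 0^2*r 1*r 2*r 3*r 5 + (-4 : ℝ)*r 0^3*r 2*r 3*r 4 + (-2 : ℝ)*r 0^3*r 1*r 5^2 + (6 : ℝ)*r 0^3*r 1*r 4^2 + (2 : ℝ)*r 0^3*r 1*r 3^2 + (2 : ℝ)*r 0^3*r 1*r 2^2 + (2 : ℝ)*r 0^3*r 1^3 + (4 : ℝ)*r 0^4*r 4*r 5 + (-2 : ℝ)*r 0^5*r 1) * r 0 + v 5 * ((-4 : ℝ)*r 0^2*r 3^2*r 4^2 + (8 : ℝ)*r 0^2*r 1*r 2*r 3*r 4 + (-4 : ℝ)*r 0^2*r 1^2*r 2^2 + (4 : ℝ)*r 0^3*r 2*r 3*r 5 + (-4 : ℝ)*r 0^3*r 1*r 4*r 5 + (-6 : ℝ)*r 0^4*r 5^2 + (2 : ℝ)*r 0^4*r 4^2 + (2 : ℝ)*r 0^4*r 3^2 + (2 : ℝ)*r 0^4*r 2^2 + (2 : ℝ)*r 0^4*r 1^2 + (-2 : ℝ)*r 0^6) * r 0) * hP' + (v 0 * ((4 : ℝ)*r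 0^3*r 2*r 4 + (-4 : ℝ)*r 0^3*r 1*r 3) + v 1 * ((4 : ℝ)*r 0*r 2^2*r 3 + (-4 : ℝ)*r 0*r 1*r 2*r 4 + (-4 : ℝ)*r 0^3*r 3) * r 0 + v 2 * ((4 : ℝ)*r 0*r 1*r 2*r 3 + (-4 : ℝ)*r 0*r 1^2*r 4 + (4 : ℝ)*r 0^3*r 4) * r 0 + v 3 * ((-4 : ℝ)*r 0*r 2*r 3*r 4 + (4 : ℝ)*r 0*r 1*r 4^2 + (-4 : ℝ)*r 0^3*r 1) * r 0 + v 4 * ((-4 : ℝ)*r 0*r 2*r 3^2 + (4 : ℝ)*r 0*r 1*r 3*r 4 + (4 : ℝ)*r 0^3*r 2) * r 0 + v 5 * ((4 : ℝ)*r 0^2*r 3*r 4 + (-4 : ℝ)*r 0^2*r 1*r 2) * r 0) * hG1
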